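/- The RGA formula via the Gram determinant: for a full-row-rank real r×s matrix A (r ≤ s), the RGA entries satisfy λ_{ij} = A_{ij}·((AAᵀ)⁻¹A)_{ij} = (1/2)·(A_{ij}/det(AAᵀ))·∂(det(AAᵀ))/∂A_{ij}. -/

import Mathlib

open Matrix

lemma hasDerivAt_det_aux {n : ℕ} {M : ℝ → Matrix (Fin n) (Fin n) ℝ}
    {M' : Matrix (Fin n) (Fin n) ℝ} {x : ℝ}
    (h : ∀ p q, HasDerivAt (fun t => M t p q) (M' p q) x) :
    HasDerivAt (fun t => (M t).det)
      (∑ k, ((M x).updateCol k (fun p => M' p k)).det) x := by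
  have key : ∀ t, (M t).det = ∑ σ : Equiv.Perm (Fin n),
      ((Equiv.Perm.sign σ : ℤ) : ℝ) * ∏ i, M t (σ i) i := by
    intro t
    rw [Matrix.det_apply]
    congr 1; ext σ
    simp [Units.smul_def, zsmul_eq_mul]
  have hd : HasDerivAt (fun t => (M t).det)
      (∑ σ : Equiv.Perm (Fin n), ((Equiv.Perm.sign σ : ℤ) : ℝ) *
        ∑ k, (∏ l ∈ Finset.univ.erase k, M x (σ l) l) • M' (σ k) k) x := by
    simp only [key]
    exact HasDerivAt.fun_sum fun σ _ =>
      ((HasDerivAt.fun_finsetProd (fun i _ => h (σ i) i)).const_mul _)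
  convert hd using 1
  simp only [Finset.mul_sum, smul_eq_mul]
  rw [Finset.sum_comm]
  congr 1; ext k
  rw [Matrix.det_apply]
  congr 1; ext σ
  have : ∀ l : Fin n, ((M x).updateCol k fun p => M' p k) (σ l) l =
      if l = k then M' (σ l) k else M x (σ l) l := by
    intro l; rw [Matrix.updateCol_apply]
  rw [Finset.prod_congr rfl (fun l _ => this l), ← Finset.mul_prod_erase _ _ (Finset.mem_univ k)]
  simp only [if_pos rfl, Units.smul_def, zsmul_eq_mul]
  rw [Finset.prod_congr rfl (fun l hl => if_neg (Finset.ne_of_mem_erase hl))]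
  push_cast
  ring

theorem rga_via_gram_det {r s : ℕ} (hrs : r ≤ s)
    (A : Matrix (Fin r) (Fin s) ℝ) (hA : IsUnit (A * Aᵀ)) (i : Fin r) (j : Fin s) :
    (Matrix.hadamard A (Aᵀ * (A * Aᵀ)⁻¹)ᵀ) i j = A i j * ((A * Aᵀ)⁻¹ * A) i j ∧
    A i j * ((A * Aᵀ)⁻¹ * A) i j =
      (1 / 2) * (A i j / (A * Aᵀ).det) *
        deriv
          (fun t : ℝ =>
            ((A.updateRow i (Function.update (A i) j t)) *
              (A.updateRow i (Function.update (A i) j t))ᵀ).det)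
          (A i j) := by
  set G := A * Aᵀ with hG
  have hdet : IsUnit G.det := (Matrix.isUnit_iff_isUnit_det G).mp hA
  have hdet0 : G.det ≠ 0 := hdet.ne_zero
  have hGT : Gᵀ = G := by rw [hG, transpose_mul, transpose_transpose]
  constructor
  · rw [Matrix.hadamard_apply]
    congr 1
    have : Aᵀ * G⁻¹ = (G⁻¹ * A)ᵀ := by
      rw [transpose_mul, Matrix.transpose_nonsing_inv, hGT]
    rw [this, transpose_transpose]
  · set a := A i j with ha
    set B : ℝ → Matrix (Fin r) (Fin s) ℝ :=
      fun t => A.updateRow i (Function.update (A i) j t) with hB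
    have hBa : B a = A := by
      rw [hB]
      simp only [ha, Function.update_eq_self, Matrix.updateRow_eq_self]
    have hBder : ∀ p m, HasDerivAt (fun t => B t p m)
        (if p = i ∧ m = j then 1 else 0) a := by
      intro p m
      rcases eq_or_ne p i with hp | hp
      · rcases eq_or_ne m j with hm | hm
        · subst hp; subst hm
          simp only [hB, Matrix.updateRow_self, Function.update_self, and_self, if_pos rfl]
          exact hasDerivAt_id a
        · simp only [hB, hp, Matrix.updateRow_self, Function.update_of_ne hm,
            hm, and_false, if_false]
          exact hasDerivAt_const a _
      · simp only [hB, Matrix.updateRow_ne hp, hp, false_and, if_false]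
        exact hasDerivAt_const a _
    set C : Matrix (Fin r) (Fin r) ℝ :=
      fun p q => (if p = i then A q j else 0) + (if q = i then A p j else 0) with hC
    have hMder : ∀ p q, HasDerivAt (fun t => (B t * (B t)ᵀ) p q) (C p q) a := by
      intro p q
      have : ∀ t, (B t * (B t)ᵀ) p q = ∑ m, B t p m * B t q m := by
        intro t; rw [Matrix.mul_apply]; rfl
      simp only [this]
      have := HasDerivAt.fun_sum (u := Finset.univ)
        (fun m (_ : m ∈ Finset.univ) => (hBder p m).fun_mul (hBder q m))
      convert this using 1
      · rfl
      · rfl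
      simp only [hBa, hC]
      rw [Finset.sum_add_distrib]
      congr 1
      · rcases eq_or_ne p i with hp | hp
        · simp [hp, ite_and, Finset.sum_ite_eq', mul_comm]
        · simp [hp]
      · rcases eq_or_ne q i with hq | hq
        · simp [hq, ite_and, Finset.sum_ite_eq']
        · simp [hq]
    have hdfull : HasDerivAt (fun t => (B t * (B t)ᵀ).det)
        (∑ k, ((B a * (B a)ᵀ).updateCol k (fun p => C p k)).det) a :=
      hasDerivAt_det_aux hMder
    rw [hBa] at hdfull
    have hderiv : deriv (fun t => (B t * (B t)ᵀ).det) a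
        = ∑ k, (G.updateCol k (fun p => C p k)).det := hdfull.deriv
    -- compute the sum
    have hsum : ∑ k, (G.updateCol k (fun p => C p k)).det
        = 2 * (G.adjugate * A) i j := by
      have h1 : ∀ k, (G.updateCol k (fun p => C p k)).det
          = Matrix.cramer G (fun p => C p k) k := by
        intro k; rw [Matrix.cramer_apply]
      simp only [h1]
      have h2 : ∀ k : Fin r, (fun p => C p k)
          = (A k j) • (Pi.single i (1:ℝ) : Fin r → ℝ) + (if k = i then (fun p => A p j) else 0) := by
        intro k
        funext p
        simp only [hC, Pi.add_apply, Pi.smul_apply, Pi.single_apply, smul_eq_mul]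
        rcases eq_or_ne k i with hk | hk
        · rcases eq_or_ne p i with hp | hp <;> simp [hk, hp]
        · rcases eq_or_ne p i with hp | hp <;> simp [hk, hp, mul_comm]
      have h3 : ∀ k : Fin r, Matrix.cramer G (fun p => C p k) k
          = A k j * Matrix.cramer G (Pi.single i 1) k
            + if k = i then Matrix.cramer G (fun p => A p j) k else 0 := by
        intro k
        rw [h2 k]
        rcases eq_or_ne k i with hk | hk
        · simp [hk, map_add, _root_.map_smul]
        · simp [hk, map_add, _root_.map_smul]
      simp only [h3]
      rw [Finset.sum_add_distrib, Finset.sum_ite_eq' Finset.univ i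
        (fun k => Matrix.cramer G (fun p => A p j) k)]
      have hcr1 : ∀ k, Matrix.cramer G (Pi.single i 1) k = G.adjugate i k := by
        intro k
        rw [Matrix.adjugate_def]
        simp only [Matrix.of_apply, hGT]
      have hcr2 : Matrix.cramer G (fun p => A p j) i = (G.adjugate * A) i j := by
        rw [Matrix.cramer_eq_adjugate_mulVec, Matrix.mulVec, Matrix.mul_apply]
        rfl
      simp only [hcr1, hcr2, Finset.mem_univ, if_true]
      rw [Matrix.mul_apply]
      rw [Finset.sum_congr rfl (fun k _ => mul_comm (A k j) (G.adjugate i k))]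
      ring
    rw [hderiv, hsum]
    -- relate inverse and adjugate
    have hinv : (G⁻¹ * A) i j = (G.det)⁻¹ * (G.adjugate * A) i j := by
      rw [Matrix.inv_def, Ring.inverse_eq_inv, Matrix.smul_mul, Matrix.smul_apply, smul_eq_mul]
    rw [hinv]
    field_simp
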